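/- For every JRP instance and every weighted proportional sharing rule WPS^w with strictly positive weights, the induced game admits a payoff dominant Nash equilibrium: there exists a Nash equilibrium T^w ∈ Γ such that f_i(T^w) ≤ f_i(T^*) for every Nash equilibrium T^* and every retailer i ∈ N. -/

import Mathlib

open Finset

noncomputable section

/-- `t` is a power-of-two (POT) value with base period `B`. -/
def IsPOT (B t : ℝ) : Prop := ∃ z : ℤ, t = (2 : ℝ) ^ z * B

/-- Membership of an interval `t` in retailer `i`'s strategy set `Γ_i`,
given major setup cost `K0`, minor setup cost `Ki` and holding parameter `Hi`. -/
def InStrategy (B K0 Ki Hi t : ℝ) : Prop :=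
  IsPOT B t ∧ Real.sqrt (Ki / (2 * Hi)) ≤ t ∧ t ≤ Real.sqrt (2 * (K0 + Ki) / Hi)

/-- `N[τ; T_{-i}] = {i} ∪ {j : T j ≤ τ}`. -/
def grp {n : ℕ} (T : Fin n → ℝ) (i : Fin n) (τ : ℝ) : Finset (Fin n) :=
  insert i (Finset.univ.filter fun j => T j ≤ τ)

/-- The set of levels `L(T) = {T j : j ∈ N}`. -/
def levels {n : ℕ} (T : Fin n → ℝ) : Finset ℝ := Finset.image T Finset.univ

/-- `1/τ⁺`: the inverse of the smallest level larger than `τ`, with the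
convention that it is `0` when no larger level exists. -/
def invSucc (L : Finset ℝ) (τ : ℝ) : ℝ :=
  if h : (L.filter fun u => τ < u).Nonempty then 1 / (L.filter fun u => τ < u).min' h
  else 0

/-- Major-setup share `x_i(T)` of retailer `i` under the weighted proportional
sharing rule with weights `w` (intended for strictly positive weights). -/
def share {n : ℕ} (K0 : ℝ) (w T : Fin n → ℝ) (i : Fin n) : ℝ :=
  ∑ τ ∈ (levels T).filter (fun τ => T i ≤ τ),
    (1 / τ - invSucc (levels T) τ) *
      (w i / ∑ j ∈ Finset.univ.filter (fun j => T j ≤ τ), w j) * K0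

/-- Major-setup share for nonnegative weights: if the order group has total
weight zero, the major setup cost is split equally among its members. -/
def shareZ {n : ℕ} (K0 : ℝ) (w T : Fin n → ℝ) (i : Fin n) : ℝ :=
  ∑ τ ∈ (levels T).filter (fun τ => T i ≤ τ),
    (1 / τ - invSucc (levels T) τ) *
      (if 0 < ∑ j ∈ Finset.univ.filter (fun j => T j ≤ τ), w j
        then w i / ∑ j ∈ Finset.univ.filter (fun j => T j ≤ τ), w j
        else 1 / ((Finset.univ.filter fun j => T j ≤ τ) : Finset (Fin n)).card) * K0

/-- Individual cost `f_i(T) = H_i T_i + K_i / T_i + x_i(T)` under `WPS^w`. -/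
def indCost {n : ℕ} (K0 : ℝ) (K H w : Fin n → ℝ) (T : Fin n → ℝ) (i : Fin n) : ℝ :=
  H i * T i + K i / T i + share K0 w T i

/-- Individual cost under the zero-weight-tolerant sharing rule. -/
def indCostZ {n : ℕ} (K0 : ℝ) (K H w : Fin n → ℝ) (T : Fin n → ℝ) (i : Fin n) : ℝ :=
  H i * T i + K i / T i + shareZ K0 w T i

/-- System cost `C(T)`. -/
def sysCost {n : ℕ} (K0 : ℝ) (K H : Fin n → ℝ) (T : Fin n → ℝ) : ℝ :=
  (∑ i, (H i * T i + K i / T i)) + K0 / (⨅ i, T i)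

/-- Nash equilibrium of the game induced by `WPS^w`. -/
def IsNE {n : ℕ} (B K0 : ℝ) (K H w : Fin n → ℝ) (T : Fin n → ℝ) : Prop :=
  (∀ i, InStrategy B K0 (K i) (H i) (T i)) ∧
  ∀ i t, InStrategy B K0 (K i) (H i) t →
    indCost K0 K H w T i ≤ indCost K0 K H w (Function.update T i t) i

/-- Nash equilibrium for the zero-weight-tolerant sharing rule. -/
def IsNEZ {n : ℕ} (B K0 : ℝ) (K H w : Fin n → ℝ) (T : Fin n → ℝ) : Prop :=
  (∀ i, InStrategy B K0 (K i) (H i) (T i)) ∧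
  ∀ i t, InStrategy B K0 (K i) (H i) t →
    indCostZ K0 K H w T i ≤ indCostZ K0 K H w (Function.update T i t) i

/-- `s = min_{∅ ⊂ S ⊆ N} (K0 + Σ_{i∈S} K_i)/(Σ_{i∈S} H_i)`. -/
def sval (n : ℕ) (K0 : ℝ) (K H : Fin n → ℝ) : ℝ :=
  sInf ((fun S : Finset (Fin n) => (K0 + ∑ i ∈ S, K i) / ∑ i ∈ S, H i) '' {S | S.Nonempty})

/-- `[b]_POT`: the POT value `a` with `b/√2 < a ≤ √2·b`. -/
def potRound (B b : ℝ) : ℝ := (2 : ℝ) ^ (round (Real.logb 2 (b / B))) * B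

/-- The optimal centralized POT policy `T^c`. -/
def Tc (n : ℕ) (B K0 : ℝ) (K H : Fin n → ℝ) (i : Fin n) : ℝ :=
  if K i ≤ sval n K0 K H * H i then potRound B (Real.sqrt (sval n K0 K H))
  else potRound B (Real.sqrt (K i / H i))

end
noncomputable section JRPAux
namespace JRP

lemma invSucc_nonneg (L : Finset ℝ) {τ : ℝ} (hτ : 0 < τ) : 0 ≤ invSucc L τ := by
  unfold invSucc
  split_ifs with h
  · have := (L.filter fun u => τ < u).min'_mem h
    have hm : τ < (L.filter fun u => τ < u).min' h := (mem_filter.mp this).2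
    exact (one_div_pos.mpr (hτ.trans hm)).le
  · exact le_refl 0

lemma invSucc_le_inv (L : Finset ℝ) {τ : ℝ} (hτ : 0 < τ) : invSucc L τ ≤ 1 / τ := by
  unfold invSucc
  split_ifs with h
  · have := (L.filter fun u => τ < u).min'_mem h
    have hm : τ < (L.filter fun u => τ < u).min' h := (mem_filter.mp this).2
    exact one_div_le_one_div_of_le hτ hm.le
  · positivity

/-- telescoping sum -/
lemma telescope_empty (L : Finset ℝ) {t : ℝ} (ht : t ∈ L)
    (h : ¬ (L.filter fun u => t < u).Nonempty) :
    ∑ τ ∈ L.filter (fun τ => t ≤ τ), (1 / τ - invSucc L τ) = 1 / t := by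
  have hfe : L.filter (fun τ => t ≤ τ) = {t} := by
    apply Finset.ext
    intro τ
    simp only [mem_filter, mem_singleton]
    constructor
    · rintro ⟨hτL, hτ⟩
      by_contra hne
      exact h ⟨τ, mem_filter.mpr ⟨hτL, lt_of_le_of_ne hτ (Ne.symm hne)⟩⟩
    · rintro rfl; exact ⟨ht, le_rfl⟩
  rw [hfe, Finset.sum_singleton]
  have : invSucc L t = 0 := dif_neg h
  rw [this, sub_zero]

lemma telescope (L : Finset ℝ) {t : ℝ} (ht : t ∈ L) :
    ∑ τ ∈ L.filter (fun τ => t ≤ τ), (1 / τ - invSucc L τ) = 1 / t := by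
  suffices h : ∀ (k : ℕ) (t : ℝ), t ∈ L → (L.filter (fun u => t < u)).card ≤ k →
      ∑ τ ∈ L.filter (fun τ => t ≤ τ), (1 / τ - invSucc L τ) = 1 / t from
    h _ t ht le_rfl
  intro k
  induction k with
  | zero =>
    intro t ht hcard
    refine telescope_empty L ht ?_
    rw [Finset.nonempty_iff_ne_empty]
    simpa [Finset.card_eq_zero] using Nat.le_zero.mp hcard
  | succ k ih =>
    intro t ht hcard
    by_cases h : (L.filter fun u => t < u).Nonempty
    · set s := (L.filter fun u => t < u).min' h with hs
      have hsmem := (L.filter fun u => t < u).min'_mem h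
      have hsL : s ∈ L := (mem_filter.mp hsmem).1
      have hts : t < s := (mem_filter.mp hsmem).2
      have hsub : L.filter (fun u => s < u) ⊆ (L.filter fun u => t < u).erase s := by
        intro u hu
        rw [mem_erase]
        exact ⟨ne_of_gt (mem_filter.mp hu).2,
          mem_filter.mpr ⟨(mem_filter.mp hu).1, hts.trans (mem_filter.mp hu).2⟩⟩
      have hcard' : (L.filter fun u => s < u).card ≤ k := by
        have h1 := Finset.card_le_card hsub
        have h2 : ((L.filter fun u => t < u).erase s).card < (L.filter fun u => t < u).card :=
          Finset.card_erase_lt_of_mem hsmem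
        omega
      have hIH := ih s hsL hcard'
      have hset : L.filter (fun τ => t ≤ τ) = insert t (L.filter (fun τ => s ≤ τ)) := by
        apply Finset.ext
        intro τ
        simp only [mem_filter, mem_insert]
        constructor
        · rintro ⟨hτL, hτ⟩
          rcases eq_or_lt_of_le hτ with heq | hlt
          · exact Or.inl heq.symm
          · exact Or.inr ⟨hτL, Finset.min'_le _ _ (mem_filter.mpr ⟨hτL, hlt⟩)⟩
        · rintro (rfl | ⟨hτL, hτ⟩)
          · exact ⟨ht, le_rfl⟩
          · exact ⟨hτL, (hts.trans_le hτ).le⟩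
      have htnot : t ∉ L.filter (fun τ => s ≤ τ) := by
        simp only [mem_filter]
        rintro ⟨-, hle⟩
        exact absurd hle (not_le.mpr hts)
      rw [hset, Finset.sum_insert htnot, hIH]
      have : invSucc L t = 1 / s := dif_pos h
      rw [this]; ring
    · exact telescope_empty L ht h

def Wt {n : ℕ} (w T : Fin n → ℝ) (τ : ℝ) : ℝ :=
  ∑ j ∈ Finset.univ.filter (fun j => T j ≤ τ), w j

def gshare {n : ℕ} (K0 : ℝ) (w T : Fin n → ℝ) (i : Fin n) (M : Finset ℝ) : ℝ :=
  ∑ τ ∈ M.filter (fun τ => T i ≤ τ), (1 / τ - invSucc M τ) * (w i / Wt w T τ) * K0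

lemma share_eq_gshare {n : ℕ} (K0 : ℝ) (w T : Fin n → ℝ) (i : Fin n) :
    share K0 w T i = gshare K0 w T i (levels T) := rfl

lemma invSucc_eq_of_filter_eq {M M' : Finset ℝ} {τ τ' : ℝ}
    (h : M.filter (fun u => τ < u) = M'.filter (fun u => τ' < u)) :
    invSucc M τ = invSucc M' τ' := by
  unfold invSucc
  rw [h]

lemma gshare_erase {n : ℕ} (K0 : ℝ) (w T : Fin n → ℝ) (i : Fin n) (σ : ℝ) (M : Finset ℝ)
    (hσM : σ ∈ M) (hσL : σ ∉ levels T) (hLM : levels T ⊆ M) :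
    gshare K0 w T i M = gshare K0 w T i (M.erase σ) := by
  have hTiL : T i ∈ levels T := Finset.mem_image_of_mem T (Finset.mem_univ i)
  set M' := M.erase σ with hM'
  have hLM' : levels T ⊆ M' := fun x hx =>
    Finset.mem_erase.mpr ⟨fun he => hσL (he ▸ hx), hLM hx⟩
  by_cases hlt : σ < T i
  · -- σ below T i : nothing changes
    have hfe : M.filter (fun τ => T i ≤ τ) = M'.filter (fun τ => T i ≤ τ) := by
      apply Finset.ext; intro τ
      simp only [mem_filter, hM', mem_erase]
      constructor
      · rintro ⟨hτM, hτ⟩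
        exact ⟨⟨fun he => absurd hτ (by rw [he]; exact not_le.mpr hlt), hτM⟩, hτ⟩
      · rintro ⟨⟨-, hτM⟩, hτ⟩; exact ⟨hτM, hτ⟩
    unfold gshare
    rw [hfe]
    apply Finset.sum_congr rfl
    intro τ hτ
    have hτge : T i ≤ τ := (mem_filter.mp hτ).2
    have : invSucc M τ = invSucc M' τ := by
      apply invSucc_eq_of_filter_eq
      apply Finset.ext; intro u
      simp only [mem_filter, hM', mem_erase]
      constructor
      · rintro ⟨huM, hu⟩
        exact ⟨⟨fun he => absurd hu (by rw [he]; exact not_lt.mpr (hlt.le.trans hτge)), huM⟩, hu⟩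
      · rintro ⟨⟨-, huM⟩, hu⟩; exact ⟨huM, hu⟩
    rw [this]
  · push_neg at hlt
    have hTiσ : T i < σ := lt_of_le_of_ne hlt (fun he => hσL (he ▸ hTiL))
    have hPne : (M'.filter (fun u => u < σ)).Nonempty :=
      ⟨T i, mem_filter.mpr ⟨hLM' hTiL, hTiσ⟩⟩
    set p := (M'.filter (fun u => u < σ)).max' hPne with hp
    have hpmem := (M'.filter (fun u => u < σ)).max'_mem hPne
    have hpM' : p ∈ M' := (mem_filter.mp hpmem).1
    have hpσ : p < σ := (mem_filter.mp hpmem).2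
    have hTip : T i ≤ p := by
      rw [hp]
      exact Finset.le_max' (M'.filter (fun u => u < σ)) _ (mem_filter.mpr ⟨hLM' hTiL, hTiσ⟩)
    -- any element of M' below σ is ≤ p ; any element of M above p other than σ is > σ
    have hkey : ∀ u ∈ M', p < u → σ < u := by
      intro u huM' hu
      by_contra hc
      push_neg at hc
      have huσ : u < σ := lt_of_le_of_ne hc (fun he => (Finset.mem_erase.mp huM').1 he)
      have : u ≤ p := by
        rw [hp]
        exact Finset.le_max' (M'.filter (fun u => u < σ)) _ (mem_filter.mpr ⟨huM', huσ⟩)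
      exact absurd this (not_le.mpr hu)
    -- (f1) invSucc M p = 1/σ
    have hf1 : invSucc M p = 1 / σ := by
      have hne : (M.filter (fun u => p < u)).Nonempty := ⟨σ, mem_filter.mpr ⟨hσM, hpσ⟩⟩
      have : (M.filter (fun u => p < u)).min' hne = σ := by
        apply le_antisymm
        · exact Finset.min'_le _ _ (mem_filter.mpr ⟨hσM, hpσ⟩)
        · have hm := (M.filter (fun u => p < u)).min'_mem hne
          rcases mem_filter.mp hm with ⟨hmM, hmp⟩
          by_cases he : (M.filter (fun u => p < u)).min' hne = σ
          · exact le_of_eq he.symm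
          · exact (hkey _ (Finset.mem_erase.mpr ⟨he, hmM⟩) hmp).le
      rw [invSucc, dif_pos hne, this]
    -- (f2) invSucc M σ = invSucc M' p
    have hf2 : invSucc M σ = invSucc M' p := by
      apply invSucc_eq_of_filter_eq
      apply Finset.ext; intro u
      simp only [mem_filter, hM', mem_erase]
      constructor
      · rintro ⟨huM, hu⟩
        exact ⟨⟨ne_of_gt hu, huM⟩, hpσ.trans hu⟩
      · rintro ⟨⟨hne, huM⟩, hu⟩
        exact ⟨huM, hkey u (Finset.mem_erase.mpr ⟨hne, huM⟩) hu⟩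
    -- (f3) Wt at σ equals Wt at p
    have hf3 : Wt w T σ = Wt w T p := by
      unfold Wt
      apply Finset.sum_congr _ (fun _ _ => rfl)
      apply Finset.ext; intro j
      simp only [mem_filter, Finset.mem_univ, true_and]
      constructor
      · intro hj
        have hjσ : T j < σ := lt_of_le_of_ne hj (fun he => hσL (he ▸ Finset.mem_image_of_mem T (Finset.mem_univ j)))
        rw [hp]
        exact Finset.le_max' (M'.filter (fun u => u < σ)) _
          (mem_filter.mpr ⟨hLM' (Finset.mem_image_of_mem T (Finset.mem_univ j)), hjσ⟩)
      · intro hj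
        exact hj.trans hpσ.le
    -- (f4) invSucc agrees on M' except at p
    have hf4 : ∀ τ ∈ M', τ ≠ p → invSucc M τ = invSucc M' τ := by
      intro τ hτM' hτp
      have hτσ : τ ≠ σ := (Finset.mem_erase.mp hτM').1
      rcases lt_or_gt_of_ne hτσ with hcase | hcase
      · -- τ < σ, τ ≠ p hence τ < p
        have hτP : τ ∈ M'.filter (fun u => u < σ) := mem_filter.mpr ⟨hτM', hcase⟩
        have hτlep : τ ≤ p := by rw [hp]; exact Finset.le_max' (M'.filter (fun u => u < σ)) _ hτP
        have hτltp : τ < p := lt_of_le_of_ne hτlep hτp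
        have hne' : (M'.filter (fun u => τ < u)).Nonempty := ⟨p, mem_filter.mpr ⟨hpM', hτltp⟩⟩
        have hne : (M.filter (fun u => τ < u)).Nonempty := by
          rcases hne' with ⟨u, hu⟩
          exact ⟨u, mem_filter.mpr ⟨Finset.mem_of_mem_erase (mem_filter.mp hu).1, (mem_filter.mp hu).2⟩⟩
        have hmin : (M.filter (fun u => τ < u)).min' hne = (M'.filter (fun u => τ < u)).min' hne' := by
          apply le_antisymm
          · apply Finset.min'_le
            have := (M'.filter (fun u => τ < u)).min'_mem hne'
            exact mem_filter.mpr ⟨Finset.mem_of_mem_erase (mem_filter.mp this).1, (mem_filter.mp this).2⟩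
          · apply Finset.le_min'
            intro y hy
            rcases mem_filter.mp hy with ⟨hyM, hyτ⟩
            by_cases hyσ : y = σ
            · -- min' M' ≤ p < σ = y
              have : (M'.filter (fun u => τ < u)).min' hne' ≤ p :=
                Finset.min'_le _ _ (mem_filter.mpr ⟨hpM', hτltp⟩)
              rw [hyσ]; exact this.trans hpσ.le
            · exact Finset.min'_le _ _ (mem_filter.mpr ⟨Finset.mem_erase.mpr ⟨hyσ, hyM⟩, hyτ⟩)
        rw [invSucc, invSucc, dif_pos hne, dif_pos hne', hmin]
      · -- σ < τ : filters are equal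
        apply invSucc_eq_of_filter_eq
        apply Finset.ext; intro u
        simp only [mem_filter, hM', mem_erase]
        constructor
        · rintro ⟨huM, hu⟩
          exact ⟨⟨fun he => absurd hu (by rw [he]; exact not_lt.mpr hcase.le), huM⟩, hu⟩
        · rintro ⟨⟨-, huM⟩, hu⟩; exact ⟨huM, hu⟩
    -- now the sum manipulation
    have hσM'f : σ ∉ M'.filter (fun τ => T i ≤ τ) := fun hc =>
      (Finset.mem_erase.mp (mem_filter.mp hc).1).1 rfl
    have hsplit : M.filter (fun τ => T i ≤ τ) = insert σ (M'.filter (fun τ => T i ≤ τ)) := by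
      apply Finset.ext; intro τ
      simp only [mem_filter, mem_insert, hM', mem_erase]
      constructor
      · rintro ⟨hτM, hτ⟩
        by_cases he : τ = σ
        · exact Or.inl he
        · exact Or.inr ⟨⟨he, hτM⟩, hτ⟩
      · rintro (rfl | ⟨⟨-, hτM⟩, hτ⟩)
        · exact ⟨hσM, hlt⟩
        · exact ⟨hτM, hτ⟩
    have hpmemf : p ∈ M'.filter (fun τ => T i ≤ τ) := mem_filter.mpr ⟨hpM', hTip⟩
    unfold gshare
    rw [hsplit, Finset.sum_insert hσM'f]
    rw [← Finset.add_sum_erase _ _ hpmemf, ← Finset.add_sum_erase _ _ hpmemf]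
    have hrest : ∑ τ ∈ (M'.filter (fun τ => T i ≤ τ)).erase p,
        (1 / τ - invSucc M τ) * (w i / Wt w T τ) * K0
        = ∑ τ ∈ (M'.filter (fun τ => T i ≤ τ)).erase p,
        (1 / τ - invSucc M' τ) * (w i / Wt w T τ) * K0 := by
      apply Finset.sum_congr rfl
      intro τ hτ
      rcases Finset.mem_erase.mp hτ with ⟨hτp, hτmem⟩
      rw [hf4 τ (mem_filter.mp hτmem).1 hτp]
    rw [hrest, hf1, hf2, hf3]
    ring

lemma gshare_superset {n : ℕ} (K0 : ℝ) (w T : Fin n → ℝ) (i : Fin n) (M : Finset ℝ)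
    (hLM : levels T ⊆ M) : gshare K0 w T i M = share K0 w T i := by
  rw [share_eq_gshare]
  suffices h : ∀ (k : ℕ) (M : Finset ℝ), levels T ⊆ M → (M \ levels T).card ≤ k →
      gshare K0 w T i M = gshare K0 w T i (levels T) from
    h _ M hLM le_rfl
  intro k
  induction k with
  | zero =>
    intro M hLM hcard
    have : M \ levels T = ∅ := Finset.card_eq_zero.mp (Nat.le_zero.mp hcard)
    have hME : M = levels T :=
      Finset.Subset.antisymm (fun x hx => by
        by_contra hc
        exact absurd (Finset.mem_sdiff.mpr ⟨hx, hc⟩) (by rw [this]; exact Finset.notMem_empty x)) hLM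
    rw [hME]
  | succ k ih =>
    intro M hLM hcard
    by_cases hE : (M \ levels T) = ∅
    · have hME : M = levels T :=
        Finset.Subset.antisymm (fun x hx => by
          by_contra hc
          exact absurd (Finset.mem_sdiff.mpr ⟨hx, hc⟩) (by rw [hE]; exact Finset.notMem_empty x)) hLM
      rw [hME]
    · rcases Finset.nonempty_iff_ne_empty.mpr hE with ⟨σ, hσ⟩
      rcases Finset.mem_sdiff.mp hσ with ⟨hσM, hσL⟩
      rw [gshare_erase K0 w T i σ M hσM hσL hLM]
      apply ih
      · exact fun x hx => Finset.mem_erase.mpr ⟨fun he => hσL (he ▸ hx), hLM hx⟩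
      · have : M.erase σ \ levels T = (M \ levels T).erase σ := by
          rw [Finset.erase_sdiff_comm]
        rw [this]
        have := Finset.card_erase_lt_of_mem hσ
        omega

lemma levels_subset_union_left (T T' : Fin n → ℝ) : levels T ⊆ levels T ∪ levels T' :=
  Finset.subset_union_left

lemma Wt_pos {n : ℕ} {w : Fin n → ℝ} (hw : ∀ j, 0 < w j) (T : Fin n → ℝ) {i : Fin n} {τ : ℝ}
    (h : T i ≤ τ) : 0 < Wt w T τ := by
  apply Finset.sum_pos (fun j _ => hw j)
  exact ⟨i, mem_filter.mpr ⟨Finset.mem_univ i, h⟩⟩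

lemma Wt_le_total {n : ℕ} {w : Fin n → ℝ} (hw : ∀ j, 0 < w j) (T : Fin n → ℝ) (τ : ℝ) :
    Wt w T τ ≤ ∑ j, w j :=
  Finset.sum_le_sum_of_subset_of_nonneg (Finset.filter_subset _ _) (fun j _ _ => (hw j).le)

lemma Wt_anti {n : ℕ} {w : Fin n → ℝ} (hw : ∀ j, 0 < w j) {T T' : Fin n → ℝ}
    (hle : ∀ j, T j ≤ T' j) (τ : ℝ) : Wt w T' τ ≤ Wt w T τ := by
  apply Finset.sum_le_sum_of_subset_of_nonneg _ (fun j _ _ => (hw j).le)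
  intro j hj
  exact mem_filter.mpr ⟨Finset.mem_univ j, (hle j).trans (mem_filter.mp hj).2⟩

lemma levels_pos {n : ℕ} {T : Fin n → ℝ} (hT : ∀ j, 0 < T j) : ∀ x ∈ levels T, 0 < x := by
  intro x hx
  rcases Finset.mem_image.mp hx with ⟨j, -, rfl⟩
  exact hT j

/-- Monotonicity of the share in the opponents' policy, i's strategy fixed. -/
lemma share_mono {n : ℕ} {K0 : ℝ} (hK0 : 0 ≤ K0) {w : Fin n → ℝ} (hw : ∀ j, 0 < w j)
    {T T' : Fin n → ℝ} (i : Fin n) (hT : ∀ j, 0 < T j) (hTi : T i = T' i)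
    (hle : ∀ j, T j ≤ T' j) : share K0 w T i ≤ share K0 w T' i := by
  have hT' : ∀ j, 0 < T' j := fun j => (hT j).trans_le (hle j)
  set M := levels T ∪ levels T' with hM
  have hMpos : ∀ x ∈ M, 0 < x := by
    intro x hx
    rcases Finset.mem_union.mp hx with h | h
    · exact levels_pos hT x h
    · exact levels_pos hT' x h
  rw [← gshare_superset K0 w T i M Finset.subset_union_left,
    ← gshare_superset K0 w T' i M Finset.subset_union_right]
  unfold gshare
  rw [← hTi]
  apply Finset.sum_le_sum
  intro τ hτ
  have hτpos : 0 < τ := hMpos τ (mem_filter.mp hτ).1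
  have hA : 0 ≤ 1 / τ - invSucc M τ := sub_nonneg.mpr (invSucc_le_inv M hτpos)
  have hTiτ : T i ≤ τ := (mem_filter.mp hτ).2
  have hW' : 0 < Wt w T' τ := Wt_pos hw T' (hTi ▸ hTiτ)
  have hWW : Wt w T' τ ≤ Wt w T τ := Wt_anti hw hle τ
  apply mul_le_mul_of_nonneg_right _ hK0
  apply mul_le_mul_of_nonneg_left _ hA
  exact div_le_div_of_nonneg_left (hw i).le hW' hWW

/-- The shared-cost difference between two own strategies, as a band sum. -/
lemma gshare_update_diff {n : ℕ} (K0 : ℝ) (w T : Fin n → ℝ) (i : Fin n) {t t' : ℝ}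
    (htt : t' ≤ t) (M : Finset ℝ)
    (h1 : levels (Function.update T i t) ⊆ M) (h2 : levels (Function.update T i t') ⊆ M) :
    gshare K0 w (Function.update T i t') i M = gshare K0 w (Function.update T i t) i M +
      ∑ τ ∈ (M.filter (fun τ => t' ≤ τ)).filter (fun τ => ¬ t ≤ τ),
        (1 / τ - invSucc M τ) * (w i / Wt w (Function.update T i t') τ) * K0 := by
  unfold gshare
  simp only [Function.update_self]
  have hsplit := Finset.sum_filter_add_sum_filter_not (M.filter (fun τ => t' ≤ τ))
    (fun τ => t ≤ τ)
    (fun τ => (1 / τ - invSucc M τ) * (w i / Wt w (Function.update T i t') τ) * K0)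
  have hff : (M.filter (fun τ => t' ≤ τ)).filter (fun τ => t ≤ τ) =
      M.filter (fun τ => t ≤ τ) := by
    apply Finset.ext; intro τ
    simp only [mem_filter]
    exact ⟨fun ⟨⟨h1, _⟩, h2⟩ => ⟨h1, h2⟩, fun ⟨h1, h2⟩ => ⟨⟨h1, htt.trans h2⟩, h2⟩⟩
  rw [hff] at hsplit
  have hWeq : ∀ τ ∈ M.filter (fun τ => t ≤ τ),
      Wt w (Function.update T i t) τ = Wt w (Function.update T i t') τ := by
    intro τ hτ
    have htτ : t ≤ τ := (mem_filter.mp hτ).2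
    unfold Wt
    apply Finset.sum_congr _ (fun _ _ => rfl)
    apply Finset.ext; intro j
    simp only [mem_filter, Finset.mem_univ, true_and]
    by_cases hj : j = i
    · subst hj
      simp only [Function.update_self]
      exact ⟨fun _ => htt.trans htτ, fun _ => htτ⟩
    · simp only [Function.update_of_ne hj]
  have : ∑ τ ∈ M.filter (fun τ => t ≤ τ),
      (1 / τ - invSucc M τ) * (w i / Wt w (Function.update T i t) τ) * K0 =
      ∑ τ ∈ M.filter (fun τ => t ≤ τ),
      (1 / τ - invSucc M τ) * (w i / Wt w (Function.update T i t') τ) * K0 := by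
    apply Finset.sum_congr rfl
    intro τ hτ
    rw [hWeq τ hτ]
  rw [this]
  exact hsplit.symm

/-- Increasing differences: opponents larger makes the difference
`f_i(t) - f_i(t')` (for `t' ≤ t`) smaller. -/
lemma share_diff_mono {n : ℕ} {K0 : ℝ} (hK0 : 0 ≤ K0) {w : Fin n → ℝ} (hw : ∀ j, 0 < w j)
    {T T' : Fin n → ℝ} (i : Fin n) {t t' : ℝ}
    (hT : ∀ j, 0 < T j) (ht' : 0 < t') (htt : t' ≤ t) (hle : ∀ j, T j ≤ T' j) :
    share K0 w (Function.update T' i t) i - share K0 w (Function.update T' i t') i ≤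
    share K0 w (Function.update T i t) i - share K0 w (Function.update T i t') i := by
  have hT' : ∀ j, 0 < T' j := fun j => (hT j).trans_le (hle j)
  set M := ((levels (Function.update T i t) ∪ levels (Function.update T i t')) ∪
    (levels (Function.update T' i t) ∪ levels (Function.update T' i t'))) with hM
  have hMpos : ∀ x ∈ M, 0 < x := by
    intro x hx
    have hpos : ∀ (S : Fin n → ℝ) (s : ℝ), (∀ j, 0 < S j) → 0 < s →
        ∀ y ∈ levels (Function.update S i s), 0 < y := by
      intro S s hS hs y hy
      rcases Finset.mem_image.mp hy with ⟨j, -, rfl⟩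
      by_cases hj : j = i
      · subst hj; simpa using hs
      · simpa [Function.update_of_ne hj] using hS j
    have ht : 0 < t := ht'.trans_le htt
    rcases Finset.mem_union.mp hx with h | h <;> rcases Finset.mem_union.mp h with h | h
    · exact hpos T t hT ht x h
    · exact hpos T t' hT ht' x h
    · exact hpos T' t hT' ht x h
    · exact hpos T' t' hT' ht' x h
  have s1 : levels (Function.update T i t) ⊆ M := by
    intro x hx; exact Finset.mem_union_left _ (Finset.mem_union_left _ hx)
  have s2 : levels (Function.update T i t') ⊆ M := by
    intro x hx; exact Finset.mem_union_left _ (Finset.mem_union_right _ hx)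
  have s3 : levels (Function.update T' i t) ⊆ M := by
    intro x hx; exact Finset.mem_union_right _ (Finset.mem_union_left _ hx)
  have s4 : levels (Function.update T' i t') ⊆ M := by
    intro x hx; exact Finset.mem_union_right _ (Finset.mem_union_right _ hx)
  rw [← gshare_superset K0 w _ i M s1, ← gshare_superset K0 w _ i M s2,
    ← gshare_superset K0 w _ i M s3, ← gshare_superset K0 w _ i M s4]
  rw [gshare_update_diff K0 w T i htt M s1 s2, gshare_update_diff K0 w T' i htt M s3 s4]
  simp only [sub_add_cancel_left]
  apply neg_le_neg
  apply Finset.sum_le_sum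
  intro τ hτ
  have hτM : τ ∈ M := (mem_filter.mp ((mem_filter.mp hτ).1)).1
  have hτt' : t' ≤ τ := (mem_filter.mp ((mem_filter.mp hτ).1)).2
  have hτpos : 0 < τ := hMpos τ hτM
  have hA : 0 ≤ 1 / τ - invSucc M τ := sub_nonneg.mpr (invSucc_le_inv M hτpos)
  have hup : ∀ j, Function.update T i t' j ≤ Function.update T' i t' j := by
    intro j
    by_cases hj : j = i
    · subst hj; simp
    · simp only [Function.update_of_ne hj]; exact hle j
  have hW' : 0 < Wt w (Function.update T' i t') τ := by
    have hmem : Function.update T' i t' i ≤ τ := by simpa using hτt'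
    exact Wt_pos hw _ hmem
  have hWW : Wt w (Function.update T' i t') τ ≤ Wt w (Function.update T i t') τ :=
    Wt_anti hw hup τ
  apply mul_le_mul_of_nonneg_right _ hK0
  apply mul_le_mul_of_nonneg_left _ hA
  exact div_le_div_of_nonneg_left (hw i).le hW' hWW

lemma wi_le_Wt {n : ℕ} {w : Fin n → ℝ} (hw : ∀ j, 0 < w j) (T : Fin n → ℝ) {i : Fin n}
    {τ : ℝ} (h : T i ≤ τ) : w i ≤ Wt w T τ :=
  Finset.single_le_sum (fun j _ => (hw j).le) (mem_filter.mpr ⟨Finset.mem_univ i, h⟩)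

lemma share_le_K0_div {n : ℕ} {K0 : ℝ} (hK0 : 0 ≤ K0) {w : Fin n → ℝ} (hw : ∀ j, 0 < w j)
    (T : Fin n → ℝ) (i : Fin n) (hT : ∀ j, 0 < T j) : share K0 w T i ≤ K0 / T i := by
  have hTiL : T i ∈ levels T := Finset.mem_image_of_mem T (Finset.mem_univ i)
  have htel := telescope (levels T) hTiL
  have hstep : share K0 w T i ≤
      ∑ τ ∈ (levels T).filter (fun τ => T i ≤ τ), (1 / τ - invSucc (levels T) τ) * K0 := by
    rw [share_eq_gshare]
    unfold gshare
    apply Finset.sum_le_sum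
    intro τ hτ
    have hτpos : 0 < τ := levels_pos hT τ (mem_filter.mp hτ).1
    have hA : 0 ≤ 1 / τ - invSucc (levels T) τ :=
      sub_nonneg.mpr (invSucc_le_inv (levels T) hτpos)
    have hWpos : 0 < Wt w T τ := Wt_pos hw T (mem_filter.mp hτ).2
    have : w i / Wt w T τ ≤ 1 := by
      rw [div_le_one hWpos]
      exact wi_le_Wt hw T (mem_filter.mp hτ).2
    calc (1 / τ - invSucc (levels T) τ) * (w i / Wt w T τ) * K0
        ≤ (1 / τ - invSucc (levels T) τ) * 1 * K0 :=
          mul_le_mul_of_nonneg_right (mul_le_mul_of_nonneg_left this hA) hK0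
      _ = (1 / τ - invSucc (levels T) τ) * K0 := by ring
  calc share K0 w T i ≤ _ := hstep
    _ = (∑ τ ∈ (levels T).filter (fun τ => T i ≤ τ), (1 / τ - invSucc (levels T) τ)) * K0 := by
        rw [Finset.sum_mul]
    _ = (1 / T i) * K0 := by rw [htel]
    _ = K0 / T i := by ring

lemma le_share {n : ℕ} {K0 : ℝ} (hK0 : 0 ≤ K0) {w : Fin n → ℝ} (hw : ∀ j, 0 < w j)
    (T : Fin n → ℝ) (i : Fin n) (hT : ∀ j, 0 < T j) :
    K0 * (w i / ∑ j, w j) / T i ≤ share K0 w T i := by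
  have hTiL : T i ∈ levels T := Finset.mem_image_of_mem T (Finset.mem_univ i)
  have htel := telescope (levels T) hTiL
  have htot : 0 < ∑ j, w j := Finset.sum_pos (fun j _ => hw j) ⟨i, Finset.mem_univ i⟩
  have hstep : ∑ τ ∈ (levels T).filter (fun τ => T i ≤ τ),
      (1 / τ - invSucc (levels T) τ) * (w i / ∑ j, w j) * K0 ≤ share K0 w T i := by
    rw [share_eq_gshare]
    unfold gshare
    apply Finset.sum_le_sum
    intro τ hτ
    have hτpos : 0 < τ := levels_pos hT τ (mem_filter.mp hτ).1
    have hA : 0 ≤ 1 / τ - invSucc (levels T) τ :=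
      sub_nonneg.mpr (invSucc_le_inv (levels T) hτpos)
    have hWpos : 0 < Wt w T τ := Wt_pos hw T (mem_filter.mp hτ).2
    have : w i / ∑ j, w j ≤ w i / Wt w T τ :=
      div_le_div_of_nonneg_left (hw i).le hWpos (Wt_le_total hw T τ)
    exact mul_le_mul_of_nonneg_right (mul_le_mul_of_nonneg_left this hA) hK0
  calc K0 * (w i / ∑ j, w j) / T i
      = (1 / T i) * ((w i / ∑ j, w j) * K0) := by ring
    _ = (∑ τ ∈ (levels T).filter (fun τ => T i ≤ τ), (1 / τ - invSucc (levels T) τ)) *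
          ((w i / ∑ j, w j) * K0) := by rw [htel]
    _ = ∑ τ ∈ (levels T).filter (fun τ => T i ≤ τ),
          (1 / τ - invSucc (levels T) τ) * (w i / ∑ j, w j) * K0 := by
        rw [Finset.sum_mul]
        apply Finset.sum_congr rfl
        intro τ _
        ring
    _ ≤ share K0 w T i := hstep

lemma share_nonneg {n : ℕ} {K0 : ℝ} (hK0 : 0 ≤ K0) {w : Fin n → ℝ} (hw : ∀ j, 0 < w j)
    (T : Fin n → ℝ) (i : Fin n) (hT : ∀ j, 0 < T j) : 0 ≤ share K0 w T i := by
  refine le_trans ?_ (le_share hK0 hw T i hT)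
  have htot : 0 < ∑ j, w j := Finset.sum_pos (fun j _ => hw j) ⟨i, Finset.mem_univ i⟩
  exact div_nonneg (mul_nonneg hK0 (div_nonneg (hw i).le htot.le)) (hT i).le

/-! ### POT values indexed by integer exponents -/

def pw (B : ℝ) (z : ℤ) : ℝ := (2 : ℝ) ^ z * B

lemma pw_pos {B : ℝ} (hB : 0 < B) (z : ℤ) : 0 < pw B z := by
  unfold pw; positivity

lemma pw_strictMono {B : ℝ} (hB : 0 < B) : StrictMono (pw B) := by
  intro a b hab
  unfold pw
  apply mul_lt_mul_of_pos_right _ hB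
  exact zpow_lt_zpow_right₀ (by norm_num) hab

lemma pw_mono {B : ℝ} (hB : 0 < B) : Monotone (pw B) := (pw_strictMono hB).monotone

lemma pw_eq_rpow {B : ℝ} (z : ℤ) : pw B z = (2 : ℝ) ^ (z : ℝ) * B := by
  rw [pw, Real.rpow_intCast]

lemma pw_le_iff {B x : ℝ} (hB : 0 < B) (hx : 0 < x) (z : ℤ) :
    pw B z ≤ x ↔ z ≤ ⌊Real.logb 2 (x / B)⌋ := by
  rw [pw_eq_rpow, ← le_div_iff₀ hB, Int.le_floor]
  have hxB : 0 < x / B := div_pos hx hB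
  conv_lhs => rw [← Real.rpow_logb (b := 2) (by norm_num) (by norm_num) hxB]
  exact Real.rpow_le_rpow_left_iff (by norm_num)

lemma le_pw_iff {B x : ℝ} (hB : 0 < B) (hx : 0 < x) (z : ℤ) :
    x ≤ pw B z ↔ ⌈Real.logb 2 (x / B)⌉ ≤ z := by
  rw [pw_eq_rpow, ← div_le_iff₀ hB, Int.ceil_le]
  have hxB : 0 < x / B := div_pos hx hB
  conv_lhs => rw [← Real.rpow_logb (b := 2) (by norm_num) (by norm_num) hxB]
  exact Real.rpow_le_rpow_left_iff (by norm_num)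

lemma pw_lt_of_lt_ceil {B x : ℝ} (hB : 0 < B) (hx : 0 < x) {z : ℤ}
    (hz : z < ⌈Real.logb 2 (x / B)⌉) : pw B z < x := by
  by_contra hc
  push_neg at hc
  exact absurd ((le_pw_iff hB hx z).mp hc) (not_le.mpr hz)

lemma pw_two_mul {B : ℝ} (z : ℤ) : pw B (z + 1) = 2 * pw B z := by
  unfold pw
  rw [zpow_add_one₀ (by norm_num : (2:ℝ) ≠ 0)]
  ring

/-! ### Game layer -/

section Game
variable {n : ℕ} (B K0 : ℝ) (K H w : Fin n → ℝ)

def Li (i : Fin n) : ℝ := Real.sqrt (K i / (2 * H i))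
def Ui (i : Fin n) : ℝ := Real.sqrt (2 * (K0 + K i) / H i)
def bexp (i : Fin n) : ℤ := ⌊Real.logb 2 (Ui K0 K H i / B)⌋
def Mi (i : Fin n) : ℝ := H i * pw B (bexp B K0 K H i) + K i / pw B (bexp B K0 K H i) +
  K0 / pw B (bexp B K0 K H i)
def ci (i : Fin n) : ℝ := K0 * (w i / ∑ j, w j)
def mi (i : Fin n) : ℝ := max (Li K H i) (ci K0 w i / Mi B K0 K H i)
def aexp (i : Fin n) : ℤ := ⌈Real.logb 2 (mi B K0 K H w i / B)⌉

variable (hB : 0 < B) (hK0 : 0 < K0) (hK : ∀ i, 0 ≤ K i) (hH : ∀ i, 0 < H i)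
  (hw : ∀ i, 0 < w i)

include hK0 hK hH in
lemma Ui_pos (i : Fin n) : 0 < Ui K0 K H i := by
  have h1 := hK0
  have h2 := hK i
  have h3 := hH i
  apply Real.sqrt_pos.mpr
  positivity

include hB hK0 hK hH in
lemma pw_bexp_le_Ui (i : Fin n) : pw B (bexp B K0 K H i) ≤ Ui K0 K H i :=
  (pw_le_iff hB (Ui_pos K0 K H hK0 hK hH i) _).mpr le_rfl

include hB hK0 hK hH in
lemma Ui_lt_pw_bexp_succ (i : Fin n) : Ui K0 K H i < pw B (bexp B K0 K H i + 1) := by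
  by_contra hc
  push_neg at hc
  have := (pw_le_iff hB (Ui_pos K0 K H hK0 hK hH i) _).mp hc
  rw [show bexp B K0 K H i = ⌊Real.logb 2 (Ui K0 K H i / B)⌋ from rfl] at this
  omega

include hB hK0 hK hH in
lemma Li_le_pw_bexp (i : Fin n) : Li K H i ≤ pw B (bexp B K0 K H i) := by
  have hHi := hH i
  have hKi := hK i
  have h2L : 2 * Li K H i ≤ Ui K0 K H i := by
    unfold Li Ui
    have hsq4 : Real.sqrt 4 = 2 := by
      rw [show (4:ℝ) = 2^2 by norm_num, Real.sqrt_sq (by norm_num)]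
    have hmul : 2 * Real.sqrt (K i / (2 * H i)) = Real.sqrt (4 * (K i / (2 * H i))) := by
      rw [Real.sqrt_mul (by norm_num), hsq4]
    rw [hmul]
    apply Real.sqrt_le_sqrt
    have hne : H i ≠ 0 := hHi.ne'
    have h4 : 4 * (K i / (2 * H i)) = 2 * K i / H i := by
      field_simp
      ring
    rw [h4]
    gcongr <;> linarith
  have hUlt := Ui_lt_pw_bexp_succ B K0 K H hB hK0 hK hH i
  rw [pw_two_mul] at hUlt
  nlinarith [h2L, hUlt]

include hB hK0 hK hH in
lemma Mi_pos (i : Fin n) : 0 < Mi B K0 K H i := by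
  have h1 := pw_pos hB (bexp B K0 K H i)
  have h2 := hH i
  have h3 := hK i
  unfold Mi
  positivity

include hK0 hw in
lemma ci_pos (i : Fin n) : 0 < ci K0 w i := by
  have htot : 0 < ∑ j, w j := Finset.sum_pos (fun j _ => hw j) ⟨i, Finset.mem_univ i⟩
  have := hw i
  unfold ci
  positivity

include hB hK0 hK hH hw in
lemma mi_pos (i : Fin n) : 0 < mi B K0 K H w i :=
  lt_of_lt_of_le (div_pos (ci_pos K0 w hK0 hw i) (Mi_pos B K0 K H hB hK0 hK hH i))
    (le_max_right _ _)

include hB hK0 hK hH hw in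
lemma mi_le_pw_bexp (i : Fin n) : mi B K0 K H w i ≤ pw B (bexp B K0 K H i) := by
  apply max_le (Li_le_pw_bexp B K0 K H hB hK0 hK hH i)
  have hMi := Mi_pos B K0 K H hB hK0 hK hH i
  have hpwb := pw_pos hB (bexp B K0 K H i)
  have hci_le : ci K0 w i ≤ K0 := by
    have htot : 0 < ∑ j, w j := Finset.sum_pos (fun j _ => hw j) ⟨i, Finset.mem_univ i⟩
    have hwile : w i / ∑ j, w j ≤ 1 := by
      rw [div_le_one htot]
      exact Finset.single_le_sum (fun j _ => (hw j).le) (Finset.mem_univ i)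
    calc ci K0 w i = K0 * (w i / ∑ j, w j) := rfl
      _ ≤ K0 * 1 := mul_le_mul_of_nonneg_left hwile hK0.le
      _ = K0 := mul_one K0
  have hMi_ge : K0 / pw B (bexp B K0 K H i) ≤ Mi B K0 K H i := by
    have h2 := hH i
    have h3 := hK i
    unfold Mi
    nlinarith [mul_pos h2 hpwb, div_nonneg h3 hpwb.le]
  calc ci K0 w i / Mi B K0 K H i ≤ K0 / (K0 / pw B (bexp B K0 K H i)) :=
        div_le_div₀ hK0.le hci_le (div_pos hK0 hpwb) hMi_ge
    _ = pw B (bexp B K0 K H i) := by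
        field_simp
    _ ≤ pw B (bexp B K0 K H i) := le_rfl

include hB hK0 hK hH hw in
lemma aexp_le_bexp (i : Fin n) : aexp B K0 K H w i ≤ bexp B K0 K H i :=
  (le_pw_iff hB (mi_pos B K0 K H w hB hK0 hK hH hw i) _).mp
    (mi_le_pw_bexp B K0 K H w hB hK0 hK hH hw i)

include hB hK0 hK hH hw in
lemma mi_le_pw_aexp (i : Fin n) : mi B K0 K H w i ≤ pw B (aexp B K0 K H w i) :=
  (le_pw_iff hB (mi_pos B K0 K H w hB hK0 hK hH hw i) _).mpr le_rfl

include hB hK0 hK hH in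
lemma inStrategy_iff (i : Fin n) (t : ℝ) :
    InStrategy B K0 (K i) (H i) t ↔
      ∃ z : ℤ, t = pw B z ∧ Li K H i ≤ pw B z ∧ z ≤ bexp B K0 K H i := by
  constructor
  · rintro ⟨⟨z, rfl⟩, h1, h2⟩
    exact ⟨z, rfl, h1, (pw_le_iff hB (Ui_pos K0 K H hK0 hK hH i) z).mp h2⟩
  · rintro ⟨z, rfl, h1, h2⟩
    refine ⟨⟨z, rfl⟩, h1, ?_⟩
    calc pw B z ≤ pw B (bexp B K0 K H i) := pw_mono hB h2
      _ ≤ Ui K0 K H i := pw_bexp_le_Ui B K0 K H hB hK0 hK hH i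

include hB hK0 hK hH hw in
lemma box_strategy (i : Fin n) {z : ℤ} (h1 : aexp B K0 K H w i ≤ z)
    (h2 : z ≤ bexp B K0 K H i) : InStrategy B K0 (K i) (H i) (pw B z) := by
  rw [inStrategy_iff B K0 K H hB hK0 hK hH i]
  refine ⟨z, rfl, ?_, h2⟩
  calc Li K H i ≤ mi B K0 K H w i := le_max_left _ _
    _ ≤ pw B (aexp B K0 K H w i) := mi_le_pw_aexp B K0 K H w hB hK0 hK hH hw i
    _ ≤ pw B z := pw_mono hB h1

include hB hK0 hK hH hw in
lemma cut_lemma (T : Fin n → ℝ) (hT : ∀ j, 0 < T j) (i : Fin n) {z : ℤ}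
    (hz : z < aexp B K0 K H w i) (hLi : Li K H i ≤ pw B z) :
    indCost K0 K H w (Function.update T i (pw B (bexp B K0 K H i))) i <
    indCost K0 K H w (Function.update T i (pw B z)) i := by
  set p := pw B z with hpdef
  set top := pw B (bexp B K0 K H i) with htopdef
  have hp : 0 < p := pw_pos hB z
  have htop : 0 < top := pw_pos hB _
  have hupd : ∀ (s : ℝ), 0 < s → ∀ j, 0 < Function.update T i s j := by
    intro s hs j
    by_cases hj : j = i
    · subst hj; simpa using hs
    · simpa [Function.update_of_ne hj] using hT j
  -- upper bound for the top profile
  have hupper : indCost K0 K H w (Function.update T i top) i ≤ Mi B K0 K H i := by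
    unfold indCost Mi
    simp only [Function.update_self]
    rw [← htopdef]
    have := share_le_K0_div hK0.le hw (Function.update T i top) i (hupd top htop)
    simp only [Function.update_self] at this
    linarith [this]
  -- lower bound for the p profile
  have hlower : ci K0 w i / p ≤ indCost K0 K H w (Function.update T i p) i := by
    unfold indCost
    simp only [Function.update_self]
    have hsh := le_share hK0.le hw (Function.update T i p) i (hupd p hp)
    simp only [Function.update_self] at hsh
    have hKi := hK i
    have hHi := hH i
    have : ci K0 w i / p = K0 * (w i / ∑ j, w j) / p := rfl
    rw [this]
    have hnn : 0 ≤ H i * p + K i / p := by positivity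
    linarith [hsh]
  -- p < mi
  have hpmi : p < mi B K0 K H w i :=
    pw_lt_of_lt_ceil hB (mi_pos B K0 K H w hB hK0 hK hH hw i) hz
  -- mi = ci/Mi
  have hmi_eq : mi B K0 K H w i = ci K0 w i / Mi B K0 K H i := by
    have hLilt : Li K H i < mi B K0 K H w i := lt_of_le_of_lt hLi hpmi
    rcases max_cases (Li K H i) (ci K0 w i / Mi B K0 K H i) with ⟨heq, -⟩ | ⟨heq, -⟩
    · exact absurd (heq ▸ hLilt) (lt_irrefl _)
    · exact heq
  have hMipos := Mi_pos B K0 K H hB hK0 hK hH i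
  have hkey : Mi B K0 K H i < ci K0 w i / p := by
    rw [hmi_eq] at hpmi
    rw [lt_div_iff₀ hp]
    rw [lt_div_iff₀ hMipos] at hpmi
    linarith [hpmi]
  calc indCost K0 K H w (Function.update T i top) i ≤ Mi B K0 K H i := hupper
    _ < ci K0 w i / p := hkey
    _ ≤ indCost K0 K H w (Function.update T i p) i := hlower

/-! ### Best responses on the integer box -/

def toT (Z : Fin n → ℤ) : Fin n → ℝ := fun j => pw B (Z j)

def phi (i : Fin n) (z : ℤ) (Z : Fin n → ℤ) : ℝ :=
  indCost K0 K H w (Function.update (toT B Z) i (pw B z)) i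

def argset (i : Fin n) (Z : Fin n → ℤ) : Finset ℤ :=
  (Finset.Icc (aexp B K0 K H w i) (bexp B K0 K H i)).filter
    (fun z => ∀ z' ∈ Finset.Icc (aexp B K0 K H w i) (bexp B K0 K H i),
      phi B K0 K H w i z Z ≤ phi B K0 K H w i z' Z)

def br (i : Fin n) (Z : Fin n → ℤ) : ℤ :=
  if h : (argset B K0 K H w i Z).Nonempty then (argset B K0 K H w i Z).min' h
  else aexp B K0 K H w i

lemma toT_update (Z : Fin n → ℤ) (i : Fin n) (z : ℤ) :
    toT B (Function.update Z i z) = Function.update (toT B Z) i (pw B z) := by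
  funext j
  by_cases hj : j = i
  · subst hj; simp [toT]
  · simp [toT, Function.update_of_ne hj]

lemma toT_pos (hB : 0 < B) (Z : Fin n → ℤ) : ∀ j, 0 < toT B Z j := fun j => pw_pos hB (Z j)

include hB hK0 hK hH hw in
lemma argset_nonempty (i : Fin n) (Z : Fin n → ℤ) : (argset B K0 K H w i Z).Nonempty := by
  have hIcc : (Finset.Icc (aexp B K0 K H w i) (bexp B K0 K H i)).Nonempty :=
    Finset.nonempty_Icc.mpr (aexp_le_bexp B K0 K H w hB hK0 hK hH hw i)
  rcases Finset.exists_min_image _ (fun z => phi B K0 K H w i z Z) hIcc with ⟨z, hz, hmin⟩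
  exact ⟨z, mem_filter.mpr ⟨hz, hmin⟩⟩

include hB hK0 hK hH hw in
lemma br_mem (i : Fin n) (Z : Fin n → ℤ) : br B K0 K H w i Z ∈ argset B K0 K H w i Z := by
  rw [br, dif_pos (argset_nonempty B K0 K H w hB hK0 hK hH hw i Z)]
  exact Finset.min'_mem _ _

include hB hK0 hK hH hw in
lemma br_le (i : Fin n) (Z : Fin n → ℤ) {y : ℤ} (hy : y ∈ argset B K0 K H w i Z) :
    br B K0 K H w i Z ≤ y := by
  rw [br, dif_pos (argset_nonempty B K0 K H w hB hK0 hK hH hw i Z)]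
  exact Finset.min'_le _ _ hy

include hB hK0 hK hH hw in
lemma phi_diff_mono (i : Fin n) {z z' : ℤ} (hzz : z' ≤ z) {Z Z' : Fin n → ℤ}
    (hZZ : ∀ j, Z j ≤ Z' j) :
    phi B K0 K H w i z Z' - phi B K0 K H w i z' Z' ≤
    phi B K0 K H w i z Z - phi B K0 K H w i z' Z := by
  unfold phi indCost
  simp only [Function.update_self]
  have hsd := share_diff_mono (K0 := K0) hK0.le hw (T := toT B Z) (T' := toT B Z') i
    (t := pw B z) (t' := pw B z') (toT_pos B hB Z) (pw_pos hB z') (pw_mono hB hzz)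
    (fun j => pw_mono hB (hZZ j))
  linarith [hsd]

include hB hK0 hK hH hw in
lemma br_mono (i : Fin n) {Z Z' : Fin n → ℤ} (hZZ : ∀ j, Z j ≤ Z' j) :
    br B K0 K H w i Z ≤ br B K0 K H w i Z' := by
  by_contra hc
  push_neg at hc
  set m := br B K0 K H w i Z with hm
  set m' := br B K0 K H w i Z' with hm'
  have hmmem := br_mem B K0 K H w hB hK0 hK hH hw i Z
  have hm'mem := br_mem B K0 K H w hB hK0 hK hH hw i Z'
  rw [← hm] at hmmem
  rw [← hm'] at hm'mem
  rcases mem_filter.mp hmmem with ⟨hmIcc, hmmin⟩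
  rcases mem_filter.mp hm'mem with ⟨hm'Icc, hm'min⟩
  have h1 : phi B K0 K H w i m Z ≤ phi B K0 K H w i m' Z := hmmin m' hm'Icc
  have h2 : phi B K0 K H w i m' Z' ≤ phi B K0 K H w i m Z' := hm'min m hmIcc
  have hid := phi_diff_mono B K0 K H w hB hK0 hK hH hw i hc.le hZZ
  have heq : phi B K0 K H w i m' Z = phi B K0 K H w i m Z := le_antisymm (by linarith) h1
  have : m' ∈ argset B K0 K H w i Z := by
    apply mem_filter.mpr
    refine ⟨hm'Icc, fun z' hz' => ?_⟩
    rw [heq]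
    exact hmmin z' hz'
  exact absurd (br_le B K0 K H w hB hK0 hK hH hw i Z this) (not_le.mpr hc)

def seqBR : ℕ → Fin n → ℤ
  | 0 => fun i => aexp B K0 K H w i
  | (k+1) => fun i => br B K0 K H w i (seqBR k)

include hB hK0 hK hH hw in
lemma seqBR_box (k : ℕ) (i : Fin n) :
    seqBR B K0 K H w k i ∈ Finset.Icc (aexp B K0 K H w i) (bexp B K0 K H i) := by
  cases k with
  | zero =>
    exact Finset.mem_Icc.mpr ⟨le_rfl, aexp_le_bexp B K0 K H w hB hK0 hK hH hw i⟩
  | succ k =>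
    have := br_mem B K0 K H w hB hK0 hK hH hw i (seqBR B K0 K H w k)
    exact (mem_filter.mp this).1

include hB hK0 hK hH hw in
lemma seqBR_le_succ (k : ℕ) (j : Fin n) :
    seqBR B K0 K H w k j ≤ seqBR B K0 K H w (k+1) j := by
  induction k generalizing j with
  | zero =>
    have := seqBR_box B K0 K H w hB hK0 hK hH hw 1 j
    exact (Finset.mem_Icc.mp this).1
  | succ k ih =>
    exact br_mono B K0 K H w hB hK0 hK hH hw j (fun j' => ih j')

include hB hK0 hK hH hw in
lemma seqBR_fix : ∃ k : ℕ, ∀ i, seqBR B K0 K H w (k+1) i = seqBR B K0 K H w k i := by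
  by_contra hc
  push_neg at hc
  have hstrict : ∀ k : ℕ, (∑ i, seqBR B K0 K H w k i) + 1 ≤ ∑ i, seqBR B K0 K H w (k+1) i := by
    intro k
    rcases hc k with ⟨i, hi⟩
    have hlt : ∑ i, seqBR B K0 K H w k i < ∑ i, seqBR B K0 K H w (k+1) i := by
      apply Finset.sum_lt_sum (fun j _ => seqBR_le_succ B K0 K H w hB hK0 hK hH hw k j)
      exact ⟨i, Finset.mem_univ i, lt_of_le_of_ne
        (seqBR_le_succ B K0 K H w hB hK0 hK hH hw k i) (Ne.symm hi)⟩
    omega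
  have hgrow : ∀ k : ℕ, (∑ i, seqBR B K0 K H w 0 i) + k ≤ ∑ i, seqBR B K0 K H w k i := by
    intro k
    induction k with
    | zero => simp
    | succ k ih =>
      have := hstrict k
      push_cast
      push_cast at ih
      linarith
  have hbound : ∀ k : ℕ, ∑ i, seqBR B K0 K H w k i ≤ ∑ i, bexp B K0 K H i := by
    intro k
    apply Finset.sum_le_sum
    intro i _
    exact (Finset.mem_Icc.mp (seqBR_box B K0 K H w hB hK0 hK hH hw k i)).2
  set S0 := ∑ i, seqBR B K0 K H w 0 i
  set Sb := ∑ i, bexp B K0 K H i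
  have hS0b : S0 ≤ Sb := by
    apply Finset.sum_le_sum
    intro i _
    exact aexp_le_bexp B K0 K H w hB hK0 hK hH hw i
  have h1 := hgrow (Sb - S0 + 1).toNat
  have h2 := hbound (Sb - S0 + 1).toNat
  have h3 : (((Sb - S0 + 1).toNat : ℤ)) = Sb - S0 + 1 := Int.toNat_of_nonneg (by omega)
  omega

include hK0 hw in
lemma indCost_mono {T T' : Fin n → ℝ} (i : Fin n) (hT : ∀ j, 0 < T j) (hTi : T i = T' i)
    (hle : ∀ j, T j ≤ T' j) : indCost K0 K H w T i ≤ indCost K0 K H w T' i := by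
  unfold indCost
  rw [hTi]
  exact (add_le_add_iff_left _).mpr (share_mono hK0.le hw i hT hTi hle)

include hB hK0 hK hH hw in
lemma fix_argmin (Z : Fin n → ℤ) (hfix : ∀ i, br B K0 K H w i Z = Z i) (i : Fin n) {z' : ℤ}
    (hz' : z' ∈ Finset.Icc (aexp B K0 K H w i) (bexp B K0 K H i)) :
    indCost K0 K H w (toT B Z) i ≤
    indCost K0 K H w (Function.update (toT B Z) i (pw B z')) i := by
  have hmem := br_mem B K0 K H w hB hK0 hK hH hw i Z
  rw [hfix i] at hmem
  have hargmin := (mem_filter.mp hmem).2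
  have h := hargmin z' hz'
  unfold phi at h
  have hself : Function.update (toT B Z) i (pw B (Z i)) = toT B Z :=
    Function.update_eq_self i (toT B Z)
  rwa [hself] at h

include hB hK0 hK hH hw in
lemma fix_box (Z : Fin n → ℤ) (hfix : ∀ i, br B K0 K H w i Z = Z i) (i : Fin n) :
    Z i ∈ Finset.Icc (aexp B K0 K H w i) (bexp B K0 K H i) := by
  have hmem := br_mem B K0 K H w hB hK0 hK hH hw i Z
  rw [hfix i] at hmem
  exact (mem_filter.mp hmem).1

include hB hK0 hK hH hw in
lemma isNE_of_fix (Z : Fin n → ℤ) (hfix : ∀ i, br B K0 K H w i Z = Z i) :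
    IsNE B K0 K H w (toT B Z) := by
  constructor
  · intro i
    have h := Finset.mem_Icc.mp (fix_box B K0 K H w hB hK0 hK hH hw Z hfix i)
    exact box_strategy B K0 K H w hB hK0 hK hH hw i h.1 h.2
  · intro i t hs
    rw [inStrategy_iff B K0 K H hB hK0 hK hH i] at hs
    obtain ⟨z, rfl, hLi, hzb⟩ := hs
    by_cases haz : aexp B K0 K H w i ≤ z
    · exact fix_argmin B K0 K H w hB hK0 hK hH hw Z hfix i (Finset.mem_Icc.mpr ⟨haz, hzb⟩)
    · push_neg at haz
      have hcut := cut_lemma B K0 K H w hB hK0 hK hH hw (toT B Z) (toT_pos B hB Z) i haz hLi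
      have hb := fix_argmin B K0 K H w hB hK0 hK hH hw Z hfix i
        (Finset.mem_Icc.mpr ⟨aexp_le_bexp B K0 K H w hB hK0 hK hH hw i, le_rfl⟩)
      exact hb.trans hcut.le

end Game

end JRP
end JRPAux

theorem statement4 {n : ℕ} (hn : 0 < n) (B K0 : ℝ) (K H w : Fin n → ℝ)
    (hB : 0 < B) (hK0 : 0 < K0) (hK : ∀ i, 0 ≤ K i) (hH : ∀ i, 0 < H i)
    (hw : ∀ i, 0 < w i) :
    ∃ Tw : Fin n → ℝ, IsNE B K0 K H w Tw ∧
      ∀ Tstar : Fin n → ℝ, IsNE B K0 K H w Tstar →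
        ∀ i, indCost K0 K H w Tw i ≤ indCost K0 K H w Tstar i := by
  classical
  obtain ⟨kf, hkf⟩ := JRP.seqBR_fix B K0 K H w hB hK0 hK hH hw
  set Zbar := JRP.seqBR B K0 K H w kf with hZbar
  have hfix : ∀ i, JRP.br B K0 K H w i Zbar = Zbar i := hkf
  refine ⟨JRP.toT B Zbar, JRP.isNE_of_fix B K0 K H w hB hK0 hK hH hw Zbar hfix, ?_⟩
  intro Tstar hNE i
  obtain ⟨hstrat, hdev⟩ := hNE
  have hz : ∀ j, ∃ z : ℤ, Tstar j = JRP.pw B z ∧ JRP.Li K H j ≤ JRP.pw B z ∧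
      z ≤ JRP.bexp B K0 K H j :=
    fun j => (JRP.inStrategy_iff B K0 K H hB hK0 hK hH j _).mp (hstrat j)
  choose Zs hZs1 hZs2 hZs3 using hz
  have hTstar_eq : Tstar = JRP.toT B Zs := funext fun j => hZs1 j
  have hTpos : ∀ j, 0 < Tstar j := by
    intro j; rw [hZs1 j]; exact JRP.pw_pos hB (Zs j)
  have hself : ∀ j, Function.update Tstar j (JRP.pw B (Zs j)) = Tstar := by
    intro j
    rw [← hZs1 j]
    exact Function.update_eq_self j Tstar
  -- Z* is in the box
  have hZsbox : ∀ j, JRP.aexp B K0 K H w j ≤ Zs j := by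
    intro j
    by_contra hc
    push_neg at hc
    have hcut := JRP.cut_lemma B K0 K H w hB hK0 hK hH hw Tstar hTpos j hc (hZs2 j)
    rw [hself j] at hcut
    have hbdev := hdev j (JRP.pw B (JRP.bexp B K0 K H j))
      (JRP.box_strategy B K0 K H w hB hK0 hK hH hw j
        (JRP.aexp_le_bexp B K0 K H w hB hK0 hK hH hw j) le_rfl)
    linarith
  -- Z* is an argmin over the box for each player
  have hZsargmin : ∀ j, Zs j ∈ JRP.argset B K0 K H w j Zs := by
    intro j
    apply Finset.mem_filter.mpr
    refine ⟨Finset.mem_Icc.mpr ⟨hZsbox j, hZs3 j⟩, ?_⟩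
    intro z' hz'
    rcases Finset.mem_Icc.mp hz' with ⟨hz'1, hz'2⟩
    have hdev' := hdev j (JRP.pw B z')
      (JRP.box_strategy B K0 K H w hB hK0 hK hH hw j hz'1 hz'2)
    unfold JRP.phi
    rw [← hTstar_eq]
    calc indCost K0 K H w (Function.update Tstar j (JRP.pw B (Zs j))) j
        = indCost K0 K H w Tstar j := by rw [hself j]
      _ ≤ indCost K0 K H w (Function.update Tstar j (JRP.pw B z')) j := hdev'
  have hbrle : ∀ j, JRP.br B K0 K H w j Zs ≤ Zs j := fun j =>
    JRP.br_le B K0 K H w hB hK0 hK hH hw j Zs (hZsargmin j)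
  -- the iteration stays below Z*
  have hseqle : ∀ k j, JRP.seqBR B K0 K H w k j ≤ Zs j := by
    intro k
    induction k with
    | zero => intro j; exact hZsbox j
    | succ k ih =>
      intro j
      exact (JRP.br_mono B K0 K H w hB hK0 hK hH hw j (fun j' => ih j')).trans (hbrle j)
  have hZbarle : ∀ j, Zbar j ≤ Zs j := hseqle kf
  -- dominance
  have h1 : indCost K0 K H w (JRP.toT B Zbar) i ≤
      indCost K0 K H w (Function.update (JRP.toT B Zbar) i (JRP.pw B (Zs i))) i :=
    JRP.fix_argmin B K0 K H w hB hK0 hK hH hw Zbar hfix i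
      (Finset.mem_Icc.mpr ⟨hZsbox i, hZs3 i⟩)
  have h2 : indCost K0 K H w (Function.update (JRP.toT B Zbar) i (JRP.pw B (Zs i))) i ≤
      indCost K0 K H w Tstar i := by
    rw [hTstar_eq]
    apply JRP.indCost_mono K0 K H w hK0 hw i
    · intro j
      by_cases hj : j = i
      · subst hj; simp; exact JRP.pw_pos hB (Zs j)
      · simp only [Function.update_of_ne hj]
        exact JRP.pw_pos hB (Zbar j)
    · simp [JRP.toT]
    · intro j
      by_cases hj : j = i
      · subst hj; simp [JRP.toT]
      · simp only [Function.update_of_ne hj]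
        exact JRP.pw_mono hB (hZbarle j)
  exact h1.trans h2
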